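/- Let Ω = {0,1}^ℤ be the binary full shift. For every asymptotic pair (x,y), the dual norm of the functional Φ ↦ ψ_Φ(x,y) on the Banach space of shift-invariant norm-summable interactions equals sup over finite A ⊂ ℤ of (1/|A|) ∑_{w ∈ {0,1}^A} |Δ_w(x,y)|, where Δ_w(x,y) is the difference between the number of occurrences of the pattern w in y and in x. -/

import Mathlib

open scoped ENNReal Classical

/-- Binary configurations on `ℤ`. -/
abbrev Conf := ℤ → Bool

/-- Interaction: each `Φ_C` depends only on the restriction of the configuration to `C`. -/
def IsLocalInteraction (Φ : Finset ℤ → Conf → ℝ) : Prop :=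
  ∀ C : Finset ℤ, ∀ x y : Conf, (∀ i ∈ C, x i = y i) → Φ C x = Φ C y

/-- Shift invariance of an interaction: `Φ_{k+C}(x) = Φ_C(σ^k x)`. -/
def IsShiftInvInteraction (Φ : Finset ℤ → Conf → ℝ) : Prop :=
  ∀ (k : ℤ) (C : Finset ℤ) (x : Conf),
    Φ (C.image (fun i => i + k)) x = Φ C (fun i => x (i + k))

/-- The NS-norm on the full shift: `‖Φ‖_NS = ∑_{C ∋ 0} sup_x |Φ_C(x)|`, valued in `ℝ≥0∞`. -/
noncomputable def normNS (Φ : Finset ℤ → Conf → ℝ) : ℝ≥0∞ :=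
  ∑' C : {C : Finset ℤ // (0 : ℤ) ∈ C}, ⨆ x : Conf, ENNReal.ofReal |Φ C x|

/-- The cocycle `ψ_Φ(x, y) = ∑_C [Φ(y_C) - Φ(x_C)]` generated by an interaction `Φ`. -/
noncomputable def psi (Φ : Finset ℤ → Conf → ℝ) (x y : Conf) : ℝ :=
  ∑' C : Finset ℤ, (Φ C y - Φ C x)

/-- `Δ_w(x,y)`: the difference between the number of occurrences of the pattern `w` (with
shape `A`) in `y` and in `x`. -/
noncomputable def deltaCount (A : Finset ℤ) (w : {a // a ∈ A} → Bool) (x y : Conf) : ℝ :=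
  ∑' i : ℤ,
    ((if ∀ a : {a // a ∈ A}, y ((a : ℤ) + i) = w a then (1 : ℝ) else 0)
      - (if ∀ a : {a // a ∈ A}, x ((a : ℤ) + i) = w a then (1 : ℝ) else 0))

lemma min'_image_add (A : Finset ℤ) (hA : A.Nonempty) (k : ℤ) :
    (A.image (fun i => i + k)).min' (hA.image _) = A.min' hA + k := by
  rw [Finset.min'_image (f := fun i => i + k) (fun a b hab => by simpa using hab)]

lemma shift_eq_iff {A : Finset ℤ} (hA : A.Nonempty) {k k' : ℤ}
    (h : A.image (fun i => i + k) = A.image (fun i => i + k')) : k = k' := by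
  have h1 := min'_image_add A hA k
  have h2 := min'_image_add A hA k'
  have : (A.image (fun i => i + k)).min' (hA.image _)
      = (A.image (fun i => i + k')).min' (hA.image _) := by congr 1
  omega

lemma image_image_add (A : Finset ℤ) (k k' : ℤ) :
    (A.image (fun i => i + k)).image (fun i => i + k') = A.image (fun i => i + (k + k')) := by
  rw [Finset.image_image]
  exact Finset.image_congr (fun a _ => by simp [add_assoc])

section Pair
variable (x y : Conf) (hxy : {i | x i ≠ y i}.Finite)

/-- The finite set of shifts `k` for which the translate `A + k` can meet the disagreement set. -/
noncomputable def shiftSet (A : Finset ℤ) : Finset ℤ :=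
  (hxy.toFinset ×ˢ A).image (fun p => p.1 - p.2)

lemma agree_of_not_mem_shiftSet {A : Finset ℤ} {k : ℤ} (hk : k ∉ shiftSet x y hxy A)
    {a : ℤ} (ha : a ∈ A) : x (a + k) = y (a + k) := by
  by_contra h
  exact hk (Finset.mem_image.2 ⟨(a + k, a), Finset.mem_product.2
    ⟨hxy.mem_toFinset.2 h, ha⟩, by ring⟩)

lemma deltaCount_eq_sum (A : Finset ℤ) (w : {a // a ∈ A} → Bool) :
    deltaCount A w x y = ∑ k ∈ shiftSet x y hxy A,
      ((if ∀ a : {a // a ∈ A}, y ((a : ℤ) + k) = w a then (1 : ℝ) else 0)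
        - (if ∀ a : {a // a ∈ A}, x ((a : ℤ) + k) = w a then (1 : ℝ) else 0)) := by
  refine tsum_eq_sum (fun k hk => ?_)
  have : (∀ a : {a // a ∈ A}, y ((a : ℤ) + k) = w a)
      ↔ (∀ a : {a // a ∈ A}, x ((a : ℤ) + k) = w a) := by
    constructor <;> intro h a <;>
      [rw [agree_of_not_mem_shiftSet x y hxy hk a.2]; rw [← agree_of_not_mem_shiftSet x y hxy hk a.2]] <;>
      exact h a
  rw [if_congr this rfl rfl, sub_self]

end Pair

section GeDirection
variable (x y : Conf)

/-- The extremal interaction attached to a shape `A`: supported on translates of `A`,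
with value `|A|⁻¹ · sign(Δ_w)` on the translate carrying pattern `w`. -/
noncomputable def PhiA (A : Finset ℤ) : Finset ℤ → Conf → ℝ := fun C z =>
  if h : ∃ k : ℤ, C = A.image (fun i => i + k) then
    (A.card : ℝ)⁻¹ *
      (if 0 ≤ deltaCount A (fun a => z ((a : ℤ) + h.choose)) x y then 1 else -1)
  else 0

lemma PhiA_eval {A : Finset ℤ} (hA : A.Nonempty) (k : ℤ) (z : Conf) :
    PhiA x y A (A.image (fun i => i + k)) z
      = (A.card : ℝ)⁻¹ *
        (if 0 ≤ deltaCount A (fun a => z ((a : ℤ) + k)) x y then 1 else -1) := by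
  have hex : ∃ k' : ℤ, A.image (fun i => i + k) = A.image (fun i => i + k') := ⟨k, rfl⟩
  have hch : k = hex.choose := shift_eq_iff hA hex.choose_spec
  rw [PhiA, dif_pos hex, ← hch]

lemma PhiA_abs_le (A : Finset ℤ) (C : Finset ℤ) (z : Conf) :
    |PhiA x y A C z| ≤ (A.card : ℝ)⁻¹ := by
  rw [PhiA]
  split
  · rw [abs_mul, abs_of_nonneg (by positivity : (0:ℝ) ≤ (A.card : ℝ)⁻¹)]
    have h1 : ∀ c : Prop, ∀ inst : Decidable c, |(if c then (1:ℝ) else -1)| = 1 := by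
      intro c inst; split <;> simp
    rw [h1, mul_one]
  · simp

lemma PhiA_local (A : Finset ℤ) : IsLocalInteraction (PhiA x y A) := by
  intro C z z' h
  rw [PhiA, PhiA]
  split
  · rename_i hex
    have : (fun a : {a // a ∈ A} => z ((a : ℤ) + hex.choose))
        = (fun a : {a // a ∈ A} => z' ((a : ℤ) + hex.choose)) := by
      funext a
      have hmem : (↑a + hex.choose) ∈ Finset.image (fun i => i + hex.choose) A :=
        Finset.mem_image.2 ⟨a, a.2, rfl⟩
      rw [← hex.choose_spec] at hmem
      exact h _ hmem
    rw [this]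
  · rfl

lemma PhiA_shiftinv (A : Finset ℤ) : IsShiftInvInteraction (PhiA x y A) := by
  intro k C z
  by_cases hex : ∃ k' : ℤ, C = A.image (fun i => i + k')
  · rcases hex with ⟨k', rfl⟩
    rcases Finset.eq_empty_or_nonempty A with rfl | hA
    · simp [PhiA]
    rw [image_image_add, PhiA_eval x y hA (k' + k), PhiA_eval x y hA k']
    have hp : (fun a : {a // a ∈ A} => (fun i => z (i + k)) ((a : ℤ) + k'))
        = (fun a : {a // a ∈ A} => z ((a : ℤ) + (k' + k))) := by
      funext a; simp [add_assoc]
    rw [hp]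
  · have hex' : ¬ ∃ k'' : ℤ, C.image (fun i => i + k) = A.image (fun i => i + k'') := by
      rintro ⟨k'', h''⟩
      refine hex ⟨k'' + -k, ?_⟩
      have h2 := congrArg (fun s => Finset.image (fun i => i + -k) s) h''
      simp only [image_image_add] at h2
      rw [Finset.image_congr (fun (a : ℤ) _ => by simp : ∀ a ∈ C, ((fun i => i + (k + -k)) a) = id a),
        Finset.image_id] at h2
      exact h2
    rw [PhiA, PhiA, dif_neg hex, dif_neg hex']

end GeDirection

section GeDirection2
variable (x y : Conf)

lemma normNS_PhiA_le {A : Finset ℤ} (hA : A.Nonempty) : normNS (PhiA x y A) ≤ 1 := by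
  classical
  have hn : 0 < A.card := hA.card_pos
  set m : ℝ≥0∞ := ENNReal.ofReal ((A.card : ℝ)⁻¹) with hm
  set T : Finset {C : Finset ℤ // (0 : ℤ) ∈ C} :=
    A.attach.image (fun a => ⟨A.image (fun i => i + (-a.1)),
      Finset.mem_image.2 ⟨a.1, a.2, by ring⟩⟩) with hT
  have hzero : ∀ C ∉ T, (⨆ z : Conf, ENNReal.ofReal |PhiA x y A C.1 z|) = 0 := by
    intro C hC
    have hz : ∀ z, PhiA x y A C.1 z = 0 := by
      intro z
      rw [PhiA, dif_neg]
      rintro ⟨k, hk⟩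
      have h0 := C.2
      rw [hk] at h0
      obtain ⟨a, ha, hak⟩ := Finset.mem_image.1 h0
      refine hC (Finset.mem_image.2 ⟨⟨a, ha⟩, Finset.mem_attach _ _, ?_⟩)
      apply Subtype.ext
      have hka : -a = k := by omega
      simp only [hka, hk]
    simp [hz]
  rw [normNS, tsum_eq_sum hzero]
  calc (∑ C ∈ T, ⨆ z : Conf, ENNReal.ofReal |PhiA x y A C.1 z|)
      ≤ T.card • m := Finset.sum_le_card_nsmul T _ m
        (fun C _ => iSup_le fun z => ENNReal.ofReal_le_ofReal (PhiA_abs_le x y A C.1 z))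
    _ = (T.card : ℝ≥0∞) * m := nsmul_eq_mul _ _
    _ ≤ (A.card : ℝ≥0∞) * m := by
        gcongr
        exact_mod_cast le_trans Finset.card_image_le (le_of_eq Finset.card_attach)
    _ = 1 := by
        rw [hm, ← ENNReal.ofReal_natCast,
          ← ENNReal.ofReal_mul (by positivity), mul_inv_cancel₀ (by positivity), ENNReal.ofReal_one]

lemma sum_sgn_indicator {A : Finset ℤ} (z : Conf) (k : ℤ) :
    (∑ w : ({a // a ∈ A} → Bool),
        (if 0 ≤ deltaCount A w x y then (1:ℝ) else -1)
          * (if ∀ a : {a // a ∈ A}, z ((a : ℤ) + k) = w a then (1 : ℝ) else 0))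
      = (if 0 ≤ deltaCount A (fun a => z ((a : ℤ) + k)) x y then (1:ℝ) else -1) := by
  classical
  rw [Finset.sum_eq_single_of_mem (fun a : {a // a ∈ A} => z ((a : ℤ) + k))
    (Finset.mem_univ _)]
  · rw [if_pos (fun a => rfl), mul_one]
  · intro w _ hne
    have hnc : ¬ (∀ a : {a // a ∈ A}, z ((a : ℤ) + k) = w a) :=
      fun hcond => hne (funext fun a => (hcond a).symm)
    rw [if_neg hnc, mul_zero]

lemma psi_PhiA (hxy : {i | x i ≠ y i}.Finite) {A : Finset ℤ} (hA : A.Nonempty) :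
    psi (PhiA x y A) x y = (A.card : ℝ)⁻¹ * ∑ w : ({a // a ∈ A} → Bool),
      |deltaCount A w x y| := by
  classical
  set K := shiftSet x y hxy A with hK
  set S : Finset (Finset ℤ) := K.image (fun k => A.image (fun i => i + k)) with hS
  have hstep1 : psi (PhiA x y A) x y
      = ∑ C ∈ S, (PhiA x y A C y - PhiA x y A C x) := by
    refine tsum_eq_sum (fun C hC => ?_)
    by_cases hex : ∃ k : ℤ, C = A.image (fun i => i + k)
    · obtain ⟨k, rfl⟩ := hex
      have hk : k ∉ K := fun hk => hC (Finset.mem_image.2 ⟨k, hk, rfl⟩)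
      rw [PhiA_eval x y hA k, PhiA_eval x y hA k]
      have hp : (fun a : {a // a ∈ A} => y ((a : ℤ) + k))
          = (fun a : {a // a ∈ A} => x ((a : ℤ) + k)) :=
        funext fun a => (agree_of_not_mem_shiftSet x y hxy hk a.2).symm
      rw [hp, sub_self]
    · rw [PhiA, PhiA, dif_neg hex, dif_neg hex, sub_self]
  have hstep2 : ∑ C ∈ S, (PhiA x y A C y - PhiA x y A C x)
      = ∑ k ∈ K, ((A.card : ℝ)⁻¹ *
          ((if 0 ≤ deltaCount A (fun a => y ((a : ℤ) + k)) x y then (1:ℝ) else -1)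
            - (if 0 ≤ deltaCount A (fun a => x ((a : ℤ) + k)) x y then (1:ℝ) else -1))) := by
    rw [hS, Finset.sum_image (fun k _ k' _ h => shift_eq_iff hA h)]
    refine Finset.sum_congr rfl (fun k _ => ?_)
    rw [PhiA_eval x y hA k, PhiA_eval x y hA k, mul_sub]
  have hkey : ∑ w : ({a // a ∈ A} → Bool), |deltaCount A w x y|
      = ∑ k ∈ K,
          ((if 0 ≤ deltaCount A (fun a => y ((a : ℤ) + k)) x y then (1:ℝ) else -1)
            - (if 0 ≤ deltaCount A (fun a => x ((a : ℤ) + k)) x y then (1:ℝ) else -1)) := by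
    have h1 : ∀ w : ({a // a ∈ A} → Bool), |deltaCount A w x y|
        = (if 0 ≤ deltaCount A w x y then (1:ℝ) else -1) * deltaCount A w x y := by
      intro w
      split
      · rename_i h; rw [one_mul, abs_of_nonneg h]
      · rename_i h; rw [neg_one_mul, abs_of_neg (lt_of_not_ge h)]
    calc ∑ w : ({a // a ∈ A} → Bool), |deltaCount A w x y|
        = ∑ w : ({a // a ∈ A} → Bool),
            (if 0 ≤ deltaCount A w x y then (1:ℝ) else -1) * deltaCount A w x y := by
          exact Finset.sum_congr rfl (fun w _ => h1 w)
      _ = ∑ w : ({a // a ∈ A} → Bool), ∑ k ∈ K,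
            ((if 0 ≤ deltaCount A w x y then (1:ℝ) else -1) *
              ((if ∀ a : {a // a ∈ A}, y ((a : ℤ) + k) = w a then (1 : ℝ) else 0)
                - (if ∀ a : {a // a ∈ A}, x ((a : ℤ) + k) = w a then (1 : ℝ) else 0))) := by
          refine Finset.sum_congr rfl (fun w _ => ?_)
          rw [deltaCount_eq_sum x y hxy A w, Finset.mul_sum]
      _ = ∑ k ∈ K, ∑ w : ({a // a ∈ A} → Bool),
            ((if 0 ≤ deltaCount A w x y then (1:ℝ) else -1) *
              (if ∀ a : {a // a ∈ A}, y ((a : ℤ) + k) = w a then (1 : ℝ) else 0)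
            - (if 0 ≤ deltaCount A w x y then (1:ℝ) else -1) *
              (if ∀ a : {a // a ∈ A}, x ((a : ℤ) + k) = w a then (1 : ℝ) else 0)) := by
          rw [Finset.sum_comm]
          exact Finset.sum_congr rfl (fun k _ => Finset.sum_congr rfl (fun w _ => mul_sub _ _ _))
      _ = ∑ k ∈ K,
            ((if 0 ≤ deltaCount A (fun a => y ((a : ℤ) + k)) x y then (1:ℝ) else -1)
              - (if 0 ≤ deltaCount A (fun a => x ((a : ℤ) + k)) x y then (1:ℝ) else -1)) := by
          refine Finset.sum_congr rfl (fun k _ => ?_)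
          rw [Finset.sum_sub_distrib, sum_sgn_indicator x y y k, sum_sgn_indicator x y x k]
  rw [hstep1, hstep2, ← Finset.mul_sum, hkey]

lemma ge_piece (hxy : {i | x i ≠ y i}.Finite) {A : Finset ℤ} (hA : A.Nonempty) :
    (∑ w : ({a // a ∈ A} → Bool), ENNReal.ofReal |deltaCount A w x y|) / (A.card : ℝ≥0∞)
      = ENNReal.ofReal |psi (PhiA x y A) x y| := by
  have hcard : (0:ℝ) < A.card := by exact_mod_cast hA.card_pos
  rw [psi_PhiA x y hxy hA,
    abs_of_nonneg (mul_nonneg (by positivity) (Finset.sum_nonneg fun w _ => abs_nonneg _)),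
    ENNReal.ofReal_mul (by positivity),
    ENNReal.ofReal_inv_of_pos hcard, ENNReal.ofReal_natCast,
    ENNReal.ofReal_sum_of_nonneg (fun w _ => abs_nonneg _),
    div_eq_mul_inv, mul_comm]

end GeDirection2

section LeDirection

/-- Extension of a pattern by `false`. -/
noncomputable def extPat (A : Finset ℤ) (w : {a // a ∈ A} → Bool) : Conf :=
  fun i => if h : i ∈ A then w ⟨i, h⟩ else false

/-- Normalized shapes: nonempty finite sets with minimum `0`. -/
abbrev NShape : Type := {A : Finset ℤ // ∃ h : A.Nonempty, A.min' h = 0}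

/-- Parametrization of nonempty finite subsets of `ℤ` by a normalized shape and a shift. -/
noncomputable def jmap (p : NShape × ℤ) : Finset ℤ := p.1.1.image (fun i => i + p.2)

lemma jmap_inj : Function.Injective jmap := by
  rintro ⟨⟨A, hA, hA0⟩, k⟩ ⟨⟨B, hB, hB0⟩, k'⟩ h
  simp only [jmap] at h
  have h1 := min'_image_add A hA k
  have h2 := min'_image_add B hB k'
  have hmin : (A.image (fun i => i + k)).min' (hA.image _)
      = (B.image (fun i => i + k')).min' (hB.image _) := by congr 1
  rw [h1, h2, hA0, hB0] at hmin
  obtain rfl : k = k' := by omega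
  obtain rfl : A = B := by
    refine Finset.image_injective (f := fun i : ℤ => i + k) (fun a b hab => by simpa using hab) h
  rfl

lemma jmap_range (Φ : Finset ℤ → Conf → ℝ) (hloc : IsLocalInteraction Φ) (x y : Conf) :
    Function.support (fun C => Φ C y - Φ C x) ⊆ Set.range jmap := by
  intro C hC
  rcases Finset.eq_empty_or_nonempty C with rfl | hne
  · exfalso
    exact hC (sub_eq_zero.2 (hloc ∅ y x (fun i hi => absurd hi (by simp))))
  · set m := C.min' hne with hmdef
    refine ⟨⟨⟨C.image (fun i => i + (-m)), (hne.image _), ?_⟩, m⟩, ?_⟩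
    · rw [min'_image_add C hne (-m), ← hmdef]; ring
    · show (C.image (fun i => i + (-m))).image (fun i => i + m) = C
      rw [image_image_add]
      rw [Finset.image_congr (fun (a : ℤ) _ => by simp : ∀ a ∈ C, ((fun i => i + (-m + m)) a) = id a),
        Finset.image_id]

lemma Phi_pattern_shift (Φ : Finset ℤ → Conf → ℝ) (hloc : IsLocalInteraction Φ)
    (A : Finset ℤ) (z : Conf) (k : ℤ) :
    Φ A (fun i => z (i + k)) = ∑ w : ({a // a ∈ A} → Bool),
      Φ A (extPat A w) *
        (if ∀ a : {a // a ∈ A}, z ((a : ℤ) + k) = w a then (1:ℝ) else 0) := by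
  classical
  rw [Finset.sum_eq_single_of_mem (fun a : {a // a ∈ A} => z ((a : ℤ) + k))
    (Finset.mem_univ _)]
  · rw [if_pos (fun a => rfl), mul_one]
    refine hloc A _ _ (fun i hi => ?_)
    rw [extPat]
    rw [dif_pos hi]
  · intro w _ hne
    have hnc : ¬ (∀ a : {a // a ∈ A}, z ((a : ℤ) + k) = w a) :=
      fun hcond => hne (funext fun a => (hcond a).symm)
    rw [if_neg hnc, mul_zero]

/-- The per-shape supremum appearing in the NS-norm. -/
noncomputable def MM (Φ : Finset ℤ → Conf → ℝ) (C : Finset ℤ) : ℝ≥0∞ :=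
  ⨆ z : Conf, ENNReal.ofReal |Φ C z|

lemma MM_shift (Φ : Finset ℤ → Conf → ℝ) (hshift : IsShiftInvInteraction Φ)
    (A : Finset ℤ) (k : ℤ) : MM Φ (A.image (fun i => i + k)) = MM Φ A := by
  apply le_antisymm
  · refine iSup_le fun z => ?_
    rw [hshift k A z]
    exact le_iSup (fun z : Conf => ENNReal.ofReal |Φ A z|) _
  · refine iSup_le fun z => ?_
    have hz : Φ (A.image (fun i => i + k)) (fun i => z (i - k)) = Φ A z := by
      rw [hshift k A (fun i => z (i - k))]
      congr 1
      funext i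
      norm_num
    calc ENNReal.ofReal |Φ A z|
        = ENNReal.ofReal |Φ (A.image (fun i => i + k)) (fun i => z (i - k))| := by rw [hz]
      _ ≤ _ := le_iSup (fun z : Conf => ENNReal.ofReal |Φ (A.image (fun i => i + k)) z|) _

lemma MM_le_one (Φ : Finset ℤ → Conf → ℝ) (hnorm : normNS Φ ≤ 1)
    (C : Finset ℤ) (hC : (0:ℤ) ∈ C) : MM Φ C ≤ 1 := by
  refine le_trans ?_ hnorm
  exact ENNReal.le_tsum (⟨C, hC⟩ : {C : Finset ℤ // (0:ℤ) ∈ C})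

/-- The key norm estimate: the weighted sum of per-shape sups over normalized shapes
is at most the NS-norm. -/
lemma sum_card_MM_le (Φ : Finset ℤ → Conf → ℝ) (hshift : IsShiftInvInteraction Φ) :
    ∑' A : NShape, (A.1.card : ℝ≥0∞) * MM Φ A.1 ≤ normNS Φ := by
  classical
  set ι : (Σ A : NShape, {a // a ∈ A.1}) → {C : Finset ℤ // (0:ℤ) ∈ C} :=
    fun σ => ⟨σ.1.1.image (fun i => i + (-σ.2.1)),
      Finset.mem_image.2 ⟨σ.2.1, σ.2.2, by ring⟩⟩ with hι
  have hι_inj : Function.Injective ι := by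
    rintro ⟨⟨A, hA, hA0⟩, ⟨a, ha⟩⟩ ⟨⟨B, hB, hB0⟩, ⟨b, hb⟩⟩ h
    simp only [hι, Subtype.mk.injEq] at h
    have h1 := min'_image_add A hA (-a)
    have h2 := min'_image_add B hB (-b)
    have hmin : (A.image (fun i => i + (-a))).min' (hA.image _)
        = (B.image (fun i => i + (-b))).min' (hB.image _) := by congr 1
    rw [h1, h2, hA0, hB0] at hmin
    obtain rfl : a = b := by omega
    obtain rfl : A = B :=
      Finset.image_injective (f := fun i : ℤ => i + (-a)) (fun u v huv => by simpa using huv) h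
    rfl
  calc ∑' A : NShape, (A.1.card : ℝ≥0∞) * MM Φ A.1
      = ∑' A : NShape, ∑' a : {a // a ∈ A.1}, MM Φ A.1 := by
        refine tsum_congr fun A => ?_
        rw [tsum_fintype]
        simp [Finset.card_univ]
    _ = ∑' σ : (Σ A : NShape, {a // a ∈ A.1}), MM Φ σ.1.1 :=
        (ENNReal.tsum_sigma (fun (A : NShape) (_ : {a // a ∈ A.1}) => MM Φ A.1)).symm
    _ ≤ ∑' C : {C : Finset ℤ // (0:ℤ) ∈ C}, MM Φ C.1 := by
        refine Summable.tsum_le_tsum_of_inj ι hι_inj (fun c _ => zero_le)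
          (fun σ => ?_) ENNReal.summable ENNReal.summable
        exact le_of_eq (MM_shift Φ hshift σ.1.1 (-σ.2.1)).symm
    _ = normNS Φ := by rw [normNS]; exact tsum_congr fun C => rfl

end LeDirection

lemma le_piece (x y : Conf) (hxy : {i | x i ≠ y i}.Finite)
    (Φ : Finset ℤ → Conf → ℝ) (hloc : IsLocalInteraction Φ)
    (hshift : IsShiftInvInteraction Φ) (hnorm : normNS Φ ≤ 1) :
    ENNReal.ofReal |psi Φ x y| ≤
      ⨆ A : {A : Finset ℤ // A.Nonempty},
        (∑ w : ({a // a ∈ (A : Finset ℤ)} → Bool),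
          ENNReal.ofReal |deltaCount (A : Finset ℤ) w x y|)
            / ((A : Finset ℤ).card : ℝ≥0∞) := by
  classical
  set S := ⨆ A : {A : Finset ℤ // A.Nonempty},
      (∑ w : ({a // a ∈ (A : Finset ℤ)} → Bool),
        ENNReal.ofReal |deltaCount (A : Finset ℤ) w x y|)
          / ((A : Finset ℤ).card : ℝ≥0∞) with hSdef
  by_cases hS : S = ⊤
  · rw [hS]; exact le_top
  set f : Finset ℤ → ℝ := fun C => Φ C y - Φ C x with hf
  have hpsi : psi Φ x y = ∑' C : Finset ℤ, f C := rfl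
  by_cases hsum : Summable f
  swap
  · rw [hpsi, tsum_eq_zero_of_not_summable hsum]
    simp
  have hran : Function.support f ⊆ Set.range jmap := jmap_range Φ hloc x y
  have hzero : ∀ C ∉ Set.range jmap, f C = 0 :=
    fun C hC => not_not.1 fun h => hC (hran h)
  have hsum2 : Summable (f ∘ jmap) := (jmap_inj.summable_iff hzero).2 hsum
  have hz : ∀ (A : NShape) (k : ℤ), k ∉ shiftSet x y hxy A.1 → f (jmap (A, k)) = 0 := by
    intro A k hk
    show Φ (A.1.image fun i => i + k) y - Φ (A.1.image fun i => i + k) x = 0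
    rw [hshift k A.1 y, hshift k A.1 x, sub_eq_zero]
    exact (hloc A.1 _ _
      (fun i hi => agree_of_not_mem_shiftSet x y hxy hk hi)).symm
  have hinner_sum : ∀ A : NShape, Summable fun k => f (jmap (A, k)) :=
    fun A => summable_of_ne_finset_zero (s := shiftSet x y hxy A.1) (hz A)
  have h1 : psi Φ x y = ∑' A : NShape, ∑' k : ℤ, f (jmap (A, k)) := by
    rw [hpsi, ← jmap_inj.tsum_eq hran]
    exact Summable.tsum_prod' hsum2 hinner_sum
  set c : NShape → ℝ := fun A => ∑' k : ℤ, f (jmap (A, k)) with hc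
  have hc_eq : ∀ A : NShape, c A = ∑ w : ({a // a ∈ A.1} → Bool),
      Φ A.1 (extPat A.1 w) * deltaCount A.1 w x y := by
    intro A
    have hterm : ∀ k : ℤ, f (jmap (A, k)) = ∑ w : ({a // a ∈ A.1} → Bool),
        Φ A.1 (extPat A.1 w) *
          ((if ∀ a : {a // a ∈ A.1}, y ((a : ℤ) + k) = w a then (1:ℝ) else 0)
            - (if ∀ a : {a // a ∈ A.1}, x ((a : ℤ) + k) = w a then (1:ℝ) else 0)) := by
      intro k
      show Φ (A.1.image fun i => i + k) y - Φ (A.1.image fun i => i + k) x = _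
      rw [hshift k A.1 y, hshift k A.1 x,
        Phi_pattern_shift Φ hloc A.1 y k, Phi_pattern_shift Φ hloc A.1 x k,
        ← Finset.sum_sub_distrib]
      exact Finset.sum_congr rfl fun w _ => (mul_sub _ _ _).symm
    show (∑' k : ℤ, f (jmap (A, k))) = _
    rw [tsum_eq_sum (s := shiftSet x y hxy A.1) (hz A),
      Finset.sum_congr rfl (fun k _ => hterm k), Finset.sum_comm]
    refine Finset.sum_congr rfl fun w _ => ?_
    rw [← Finset.mul_sum, deltaCount_eq_sum x y hxy A.1 w]
  have hMne : ∀ A : NShape, MM Φ A.1 ≠ ⊤ := by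
    intro A
    have h0 : (0:ℤ) ∈ A.1 := by
      obtain ⟨h, h0⟩ := A.2
      have := A.1.min'_mem h
      rwa [h0] at this
    exact ne_top_of_le_ne_top ENNReal.one_ne_top (MM_le_one Φ hnorm A.1 h0)
  have habs : ∀ (A : NShape) (z : Conf), |Φ A.1 z| ≤ (MM Φ A.1).toReal := by
    intro A z
    rw [← ENNReal.toReal_ofReal (abs_nonneg (Φ A.1 z))]
    exact ENNReal.toReal_mono (hMne A)
      (le_iSup (fun z : Conf => ENNReal.ofReal |Φ A.1 z|) z)
  have hdelta : ∀ A : NShape, (∑ w : ({a // a ∈ A.1} → Bool), |deltaCount A.1 w x y|)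
      ≤ A.1.card * S.toReal := by
    intro A
    obtain ⟨hA, -⟩ := A.2
    have hle : (∑ w : ({a // a ∈ A.1} → Bool),
          ENNReal.ofReal |deltaCount A.1 w x y|) / ((A.1.card : ℕ) : ℝ≥0∞) ≤ S := by
      rw [hSdef]
      exact le_iSup (fun B : {A : Finset ℤ // A.Nonempty} =>
        (∑ w : ({a // a ∈ (B : Finset ℤ)} → Bool),
          ENNReal.ofReal |deltaCount (B : Finset ℤ) w x y|)
            / ((B : Finset ℤ).card : ℝ≥0∞)) ⟨A.1, hA⟩
    have hcard0 : ((A.1.card : ℕ) : ℝ≥0∞) ≠ 0 := by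
      exact_mod_cast hA.card_pos.ne'
    have hle2 : (∑ w : ({a // a ∈ A.1} → Bool), ENNReal.ofReal |deltaCount A.1 w x y|)
        ≤ S * (A.1.card : ℝ≥0∞) :=
      (ENNReal.div_le_iff hcard0 (ENNReal.natCast_ne_top _)).1 hle
    have h3 := ENNReal.toReal_mono
      (ENNReal.mul_ne_top hS (ENNReal.natCast_ne_top _)) hle2
    rw [ENNReal.toReal_mul, ENNReal.toReal_natCast,
      ENNReal.toReal_sum (fun w _ => ENNReal.ofReal_ne_top)] at h3
    calc (∑ w : ({a // a ∈ A.1} → Bool), |deltaCount A.1 w x y|)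
        = ∑ w : ({a // a ∈ A.1} → Bool),
            (ENNReal.ofReal |deltaCount A.1 w x y|).toReal :=
          Finset.sum_congr rfl fun w _ =>
            (ENNReal.toReal_ofReal (abs_nonneg _)).symm
      _ ≤ S.toReal * A.1.card := h3
      _ = A.1.card * S.toReal := mul_comm _ _
  have hcd : ∀ A : NShape, |c A| ≤ (MM Φ A.1).toReal * (A.1.card * S.toReal) := by
    intro A
    rw [hc_eq A]
    calc |∑ w : ({a // a ∈ A.1} → Bool), Φ A.1 (extPat A.1 w) * deltaCount A.1 w x y|
        ≤ ∑ w : ({a // a ∈ A.1} → Bool), |Φ A.1 (extPat A.1 w) * deltaCount A.1 w x y| :=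
          Finset.abs_sum_le_sum_abs _ _
      _ ≤ ∑ w : ({a // a ∈ A.1} → Bool), (MM Φ A.1).toReal * |deltaCount A.1 w x y| :=
          Finset.sum_le_sum fun w _ => by
            rw [abs_mul]
            exact mul_le_mul_of_nonneg_right (habs A _) (abs_nonneg _)
      _ = (MM Φ A.1).toReal * ∑ w : ({a // a ∈ A.1} → Bool), |deltaCount A.1 w x y| :=
          (Finset.mul_sum _ _ _).symm
      _ ≤ (MM Φ A.1).toReal * (A.1.card * S.toReal) :=
          mul_le_mul_of_nonneg_left (hdelta A) ENNReal.toReal_nonneg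
  set dE : NShape → ℝ≥0∞ :=
    fun A => MM Φ A.1 * (A.1.card : ℝ≥0∞) * ENNReal.ofReal S.toReal with hdE
  have hdE_ne : ∀ A : NShape, dE A ≠ ⊤ := fun A =>
    ENNReal.mul_ne_top (ENNReal.mul_ne_top (hMne A) (ENNReal.natCast_ne_top _))
      ENNReal.ofReal_ne_top
  have hdE_sum_le : (∑' A : NShape, dE A) ≤ ENNReal.ofReal S.toReal := by
    rw [hdE, ENNReal.tsum_mul_right]
    calc (∑' A : NShape, MM Φ A.1 * (A.1.card : ℝ≥0∞)) * ENNReal.ofReal S.toReal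
        ≤ 1 * ENNReal.ofReal S.toReal := by
          gcongr
          refine le_trans (le_of_eq (tsum_congr fun A => mul_comm _ _)) ?_
          exact le_trans (sum_card_MM_le Φ hshift) hnorm
      _ = ENNReal.ofReal S.toReal := one_mul _
  have hdE_tsum_ne : (∑' A : NShape, dE A) ≠ ⊤ :=
    ne_top_of_le_ne_top ENNReal.ofReal_ne_top hdE_sum_le
  have hd_summable : Summable (fun A : NShape => (dE A).toReal) :=
    ENNReal.summable_toReal hdE_tsum_ne
  have hdE_toReal : ∀ A : NShape,
      (dE A).toReal = (MM Φ A.1).toReal * (A.1.card * S.toReal) := by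
    intro A
    rw [hdE]
    simp only
    rw [ENNReal.toReal_mul, ENNReal.toReal_mul, ENNReal.toReal_natCast,
      ENNReal.toReal_ofReal ENNReal.toReal_nonneg, mul_assoc]
  have hcd' : ∀ A : NShape, |c A| ≤ (dE A).toReal := fun A => by
    rw [hdE_toReal A]; exact hcd A
  have habsc : Summable fun A : NShape => |c A| :=
    Summable.of_nonneg_of_le (fun A => abs_nonneg _) hcd' hd_summable
  have hfinal : |psi Φ x y| ≤ S.toReal := by
    rw [h1]
    calc |∑' A : NShape, c A| ≤ ∑' A : NShape, |c A| := by
          simpa [Real.norm_eq_abs] using norm_tsum_le_tsum_norm (f := c)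
            (by simpa [Real.norm_eq_abs] using habsc)
      _ ≤ ∑' A : NShape, (dE A).toReal := Summable.tsum_le_tsum hcd' habsc hd_summable
      _ = (∑' A : NShape, dE A).toReal := (ENNReal.tsum_toReal_eq hdE_ne).symm
      _ ≤ (ENNReal.ofReal S.toReal).toReal :=
          ENNReal.toReal_mono ENNReal.ofReal_ne_top hdE_sum_le
      _ = S.toReal := ENNReal.toReal_ofReal ENNReal.toReal_nonneg
  calc ENNReal.ofReal |psi Φ x y| ≤ ENNReal.ofReal S.toReal :=
        ENNReal.ofReal_le_ofReal hfinal
    _ = S := ENNReal.ofReal_toReal hS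

theorem stmt_16 (x y : Conf) (hxy : {i | x i ≠ y i}.Finite) :
    (⨆ Φ ∈ {Φ : Finset ℤ → Conf → ℝ |
        IsLocalInteraction Φ ∧ IsShiftInvInteraction Φ ∧ normNS Φ ≤ 1},
      ENNReal.ofReal |psi Φ x y|)
    = ⨆ A : {A : Finset ℤ // A.Nonempty},
        (∑ w : ({a // a ∈ (A : Finset ℤ)} → Bool),
          ENNReal.ofReal |deltaCount (A : Finset ℤ) w x y|) / ((A : Finset ℤ).card : ℝ≥0∞) := by
  apply le_antisymm
  · exact iSup₂_le fun Φ hΦ => le_piece x y hxy Φ hΦ.1 hΦ.2.1 hΦ.2.2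
  · refine iSup_le fun A => ?_
    rw [ge_piece x y hxy A.2]
    exact le_iSup₂_of_le (PhiA x y A.1)
      ⟨PhiA_local x y A.1, PhiA_shiftinv x y A.1, normNS_PhiA_le x y A.2⟩ le_rfl
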